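/- Let θ₀ ∈ ℝ, let α₁, α₂, α₁₃, β₁, β₂, β₁₃ : (0,∞) → ℝ be continuously differentiable, define φ₁(t) := α₁(t) + t·β₁(t), φ₂(t) := α₂(t) + t·β₂(t), φ₁₃(t) := α₁₃(t) + t·β₁₃(t), and assume α₁(t)·α₁₃(t) − α₂(t)² ≠ 0 and φ₁(t)·φ₁₃(t) − φ₂(t)² ≠ 0 for all t > 0. Suppose for all t > 0: θ₀·α₁₃(t) = t·α₁₃'(t); 2·θ₀·α₂(t) = 2·t·α₂'(t) + α₂(t); θ₀·α₁(t) = t·α₁'(t) + α₁(t); θ₀·φ₁₃(t) = t·φ₁₃'(t); 2·θ₀·φ₂(t) = 2·t·φ₂'(t) + φ₂(t); θ₀·φ₁(t) = t·φ₁'(t) + φ₁(t). Then there exist constants a₁,a₂,a₃,b₁,b₂,b₃ ∈ ℝ with a₁·a₃ − a₂² ≠ 0 and (a₁+b₁)(a₃+b₃) − (a₂+b₂)² ≠ 0, such that for all t > 0 (real powers): α₁(t) = a₁·t^(θ₀−1), α₂(t) = a₂·t^(θ₀−1/2), α₁₃(t) = a₃·t^θ₀, β₁(t) = b₁·t^(θ₀−2),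 β₂(t) = b₂·t^(θ₀−3/2), β₁₃(t) = b₃·t^(θ₀−1). -/

import Mathlib

open Set

/-- Solution of the Euler ODE `t * f' t = c * f t` on `(0,∞)`. -/
lemma ode_rpow (f : ℝ → ℝ) (c : ℝ)
    (hdiff : ∀ t ∈ Set.Ioi (0:ℝ), DifferentiableAt ℝ f t)
    (hode : ∀ t ∈ Set.Ioi (0:ℝ), t * deriv f t = c * f t) :
    ∀ t ∈ Set.Ioi (0:ℝ), f t = f 1 * t ^ c := by
  set g : ℝ → ℝ := fun t => f t * t ^ (-c) with hgdef
  have hg : ∀ t ∈ Set.Ioi (0:ℝ), HasDerivAt g 0 t := by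
    intro t ht
    have ht' : (0:ℝ) < t := ht
    have h1 : HasDerivAt f (deriv f t) t := (hdiff t ht).hasDerivAt
    have h2 : HasDerivAt (fun s : ℝ => s ^ (-c)) (-c * t ^ (-c - 1)) t :=
      Real.hasDerivAt_rpow_const (Or.inl ht'.ne')
    have h3 := h1.mul h2
    have key : deriv f t * t ^ (-c) + f t * (-c * t ^ (-c - 1)) = 0 := by
      have hsub : t ^ (-c - 1) = t ^ (-c) / t := by
        rw [Real.rpow_sub ht', Real.rpow_one]
      rw [hsub]
      have hd : deriv f t = c * f t / t := by
        rw [eq_div_iff ht'.ne']; have := hode t ht; linarith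
      rw [hd]; field_simp; ring
    rwa [key] at h3
  have hconst : ∀ t ∈ Set.Ioi (0:ℝ), g t = g 1 := by
    intro t ht
    have hdg : DifferentiableOn ℝ g (Set.Ioi (0:ℝ)) :=
      fun x hx => ((hg x hx).differentiableAt).differentiableWithinAt
    refine (convex_Ioi (0:ℝ)).is_const_of_fderivWithin_eq_zero hdg ?_ ht
      (by norm_num : (1:ℝ) ∈ Set.Ioi (0:ℝ))
    intro x hx
    rw [fderivWithin_of_isOpen isOpen_Ioi hx, (hg x hx).hasFDerivAt.fderiv]
    ext; simp
  intro t ht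
  have ht' : (0:ℝ) < t := ht
  have h2 : f t * t ^ (-c) = f 1 := by
    have := hconst t ht; simpa [hgdef] using this
  have h3 : t ^ (-c) * t ^ c = 1 := by
    rw [← Real.rpow_add ht']; simp
  calc f t = f t * (t ^ (-c) * t ^ c) := by rw [h3, mul_one]
    _ = (f t * t ^ (-c)) * t ^ c := by ring
    _ = f 1 * t ^ c := by rw [h2]

/-- Part (2) of the Liouville vector field theorem: the system (Liouv4) with constant
potential `θ₀` (with `α₁₃, β₁₃` standing for `α₁+α₃, β₁+β₃` and `t` for `r²`) forces the
classification (Liouv2). -/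
theorem liouville_homothetic_classification (θ₀ : ℝ)
    (α₁ α₂ α₁₃ β₁ β₂ β₁₃ : ℝ → ℝ)
    (hα₁ : ContDiffOn ℝ 1 α₁ (Set.Ioi 0)) (hα₂ : ContDiffOn ℝ 1 α₂ (Set.Ioi 0))
    (hα₁₃ : ContDiffOn ℝ 1 α₁₃ (Set.Ioi 0)) (hβ₁ : ContDiffOn ℝ 1 β₁ (Set.Ioi 0))
    (hβ₂ : ContDiffOn ℝ 1 β₂ (Set.Ioi 0)) (hβ₁₃ : ContDiffOn ℝ 1 β₁₃ (Set.Ioi 0))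
    (hα : ∀ t : ℝ, 0 < t → α₁ t * α₁₃ t - (α₂ t) ^ 2 ≠ 0)
    (hφ : ∀ t : ℝ, 0 < t →
      (α₁ t + t * β₁ t) * (α₁₃ t + t * β₁₃ t) - (α₂ t + t * β₂ t) ^ 2 ≠ 0)
    (hsys : ∀ t : ℝ, 0 < t →
      θ₀ * α₁₃ t = t * deriv α₁₃ t ∧
      2 * θ₀ * α₂ t = 2 * t * deriv α₂ t + α₂ t ∧
      θ₀ * α₁ t = t * deriv α₁ t + α₁ t ∧
      θ₀ * (α₁₃ t + t * β₁₃ t) = t * deriv (fun s => α₁₃ s + s * β₁₃ s) t ∧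
      2 * θ₀ * (α₂ t + t * β₂ t) =
        2 * t * deriv (fun s => α₂ s + s * β₂ s) t + (α₂ t + t * β₂ t) ∧
      θ₀ * (α₁ t + t * β₁ t) =
        t * deriv (fun s => α₁ s + s * β₁ s) t + (α₁ t + t * β₁ t)) :
    ∃ a₁ a₂ a₃ b₁ b₂ b₃ : ℝ,
      a₁ * a₃ - a₂ ^ 2 ≠ 0 ∧
      (a₁ + b₁) * (a₃ + b₃) - (a₂ + b₂) ^ 2 ≠ 0 ∧
      ∀ t : ℝ, 0 < t →
        α₁ t = a₁ * t ^ (θ₀ - 1) ∧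
        α₂ t = a₂ * t ^ (θ₀ - 1 / 2) ∧
        α₁₃ t = a₃ * t ^ θ₀ ∧
        β₁ t = b₁ * t ^ (θ₀ - 2) ∧
        β₂ t = b₂ * t ^ (θ₀ - 3 / 2) ∧
        β₁₃ t = b₃ * t ^ (θ₀ - 1) := by
  have hopen : IsOpen (Set.Ioi (0:ℝ)) := isOpen_Ioi
  have diffat : ∀ (f : ℝ → ℝ), ContDiffOn ℝ 1 f (Set.Ioi 0) →
      ∀ t ∈ Set.Ioi (0:ℝ), DifferentiableAt ℝ f t := by
    intro f hf t ht
    exact (hf.differentiableOn one_ne_zero).differentiableAt (hopen.mem_nhds ht)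
  -- φ functions
  set φ₁ : ℝ → ℝ := fun s => α₁ s + s * β₁ s with hφ₁def
  set φ₂ : ℝ → ℝ := fun s => α₂ s + s * β₂ s with hφ₂def
  set φ₁₃ : ℝ → ℝ := fun s => α₁₃ s + s * β₁₃ s with hφ₁₃def
  have hφ₁d : ContDiffOn ℝ 1 φ₁ (Set.Ioi 0) := hα₁.add (contDiffOn_id.mul hβ₁)
  have hφ₂d : ContDiffOn ℝ 1 φ₂ (Set.Ioi 0) := hα₂.add (contDiffOn_id.mul hβ₂)
  have hφ₁₃d : ContDiffOn ℝ 1 φ₁₃ (Set.Ioi 0) := hα₁₃.add (contDiffOn_id.mul hβ₁₃)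
  -- solve each ODE
  have sol₁₃ : ∀ t ∈ Set.Ioi (0:ℝ), α₁₃ t = α₁₃ 1 * t ^ θ₀ :=
    ode_rpow α₁₃ θ₀ (diffat _ hα₁₃) (fun t ht => by
      have := (hsys t ht).1; linarith)
  have sol₂ : ∀ t ∈ Set.Ioi (0:ℝ), α₂ t = α₂ 1 * t ^ (θ₀ - 1/2) :=
    ode_rpow α₂ (θ₀ - 1/2) (diffat _ hα₂) (fun t ht => by
      have := (hsys t ht).2.1; linarith)
  have sol₁ : ∀ t ∈ Set.Ioi (0:ℝ), α₁ t = α₁ 1 * t ^ (θ₀ - 1) :=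
    ode_rpow α₁ (θ₀ - 1) (diffat _ hα₁) (fun t ht => by
      have := (hsys t ht).2.2.1; linarith)
  have solφ₁₃ : ∀ t ∈ Set.Ioi (0:ℝ), φ₁₃ t = φ₁₃ 1 * t ^ θ₀ :=
    ode_rpow φ₁₃ θ₀ (diffat _ hφ₁₃d) (fun t ht => by
      have := (hsys t ht).2.2.2.1; simp only [hφ₁₃def]; linarith)
  have solφ₂ : ∀ t ∈ Set.Ioi (0:ℝ), φ₂ t = φ₂ 1 * t ^ (θ₀ - 1/2) :=
    ode_rpow φ₂ (θ₀ - 1/2) (diffat _ hφ₂d) (fun t ht => by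
      have := (hsys t ht).2.2.2.2.1; simp only [hφ₂def]; linarith)
  have solφ₁ : ∀ t ∈ Set.Ioi (0:ℝ), φ₁ t = φ₁ 1 * t ^ (θ₀ - 1) :=
    ode_rpow φ₁ (θ₀ - 1) (diffat _ hφ₁d) (fun t ht => by
      have := (hsys t ht).2.2.2.2.2; simp only [hφ₁def]; linarith)
  refine ⟨α₁ 1, α₂ 1, α₁₃ 1, β₁ 1, β₂ 1, β₁₃ 1, hα 1 one_pos, ?_, ?_⟩
  · have := hφ 1 one_pos; simpa using this
  intro t ht
  have ht' : t ∈ Set.Ioi (0:ℝ) := ht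
  have e₁ := sol₁ t ht'
  have e₂ := sol₂ t ht'
  have e₃ := sol₁₃ t ht'
  have f₁ := solφ₁ t ht'
  have f₂ := solφ₂ t ht'
  have f₃ := solφ₁₃ t ht'
  simp only [hφ₁def, hφ₂def, hφ₁₃def, one_mul] at f₁ f₂ f₃
  refine ⟨e₁, e₂, e₃, ?_, ?_, ?_⟩
  · -- β₁ t = β₁ 1 * t ^ (θ₀ - 2)
    have hpow : t ^ (θ₀ - 1) = t * t ^ (θ₀ - 2) := by
      rw [show (θ₀ - 1 : ℝ) = 1 + (θ₀ - 2) by ring, Real.rpow_add ht, Real.rpow_one]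
    have : t * β₁ t = β₁ 1 * (t * t ^ (θ₀ - 2)) := by
      rw [← hpow]
      have : α₁ t + t * β₁ t = (α₁ 1 + β₁ 1) * t ^ (θ₀ - 1) := f₁
      rw [e₁] at this; linarith [this]
    have := mul_left_cancel₀ ht.ne' (by linarith [this] : t * β₁ t = t * (β₁ 1 * t ^ (θ₀ - 2)))
    linarith [this]
  · have hpow : t ^ (θ₀ - 1/2) = t * t ^ (θ₀ - 3/2) := by
      rw [show (θ₀ - 1/2 : ℝ) = 1 + (θ₀ - 3/2) by ring, Real.rpow_add ht, Real.rpow_one]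
    have h : t * β₂ t = β₂ 1 * (t * t ^ (θ₀ - 3/2)) := by
      rw [← hpow]
      have hh : α₂ t + t * β₂ t = (α₂ 1 + β₂ 1) * t ^ (θ₀ - 1/2) := f₂
      rw [e₂] at hh; linarith [hh]
    have := mul_left_cancel₀ ht.ne' (by linarith [h] : t * β₂ t = t * (β₂ 1 * t ^ (θ₀ - 3/2)))
    linarith [this]
  · have hpow : t ^ θ₀ = t * t ^ (θ₀ - 1) := by
      have h := Real.rpow_add ht 1 (θ₀ - 1)
      rw [Real.rpow_one, show (1:ℝ) + (θ₀ - 1) = θ₀ by ring] at h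
      exact h
    have h : t * β₁₃ t = β₁₃ 1 * (t * t ^ (θ₀ - 1)) := by
      rw [← hpow]
      have hh : α₁₃ t + t * β₁₃ t = (α₁₃ 1 + β₁₃ 1) * t ^ θ₀ := f₃
      rw [e₃] at hh; linarith [hh]
    have := mul_left_cancel₀ ht.ne' (by linarith [h] : t * β₁₃ t = t * (β₁₃ 1 * t ^ (θ₀ - 1)))
    linarith [this]
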